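/- Let f, g : ℝ → ℝ be real analytic at 0 with f(0) = g(0) = 0, f(t) ≥ 0 and g(t) ≥ 0 for all t in some interval [0, ε) with ε > 0, and suppose neither f nor g is identically zero on any neighborhood of 0. If a : (0, ε) → ℝ is a function satisfying f'(t) = a(t) · g'(t) for all t ∈ (0, ε), then there exists δ > 0 such that a(t) > 0 for all t ∈ (0, δ). -/

import Mathlib

lemma deriv_pos_near_zero (f : ℝ → ℝ) (hf : AnalyticAt ℝ f 0) (hf0 : f 0 = 0)
    {ε : ℝ} (hε : 0 < ε) (hfnn : ∀ t ∈ Set.Ico (0 : ℝ) ε, 0 ≤ f t)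
    (hfnz : ¬ ∀ᶠ t in nhds (0 : ℝ), f t = 0) :
    ∃ δ > 0, ∀ t ∈ Set.Ioo (0 : ℝ) δ, 0 < deriv f t := by
  obtain ⟨r, hr, hAn⟩ := hf.exists_ball_analyticOnNhd
  have hAnd := hAn.deriv
  have hball : ∀ x ∈ Metric.ball (0 : ℝ) r, AnalyticAt ℝ f x ∧ AnalyticAt ℝ (deriv f) x :=
    fun x hx => ⟨hAn x hx, hAnd x hx⟩
  have hd0 : AnalyticAt ℝ (deriv f) 0 := hAnd 0 (Metric.mem_ball_self hr)
  rcases hd0.eventually_eq_zero_or_eventually_ne_zero with h | h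
  · exfalso
    apply hfnz
    rcases Metric.eventually_nhds_iff_ball.mp h with ⟨r', hr', hz0⟩
    set s := Metric.ball (0 : ℝ) (min r r') with hs
    have hsub_r : s ⊆ Metric.ball (0 : ℝ) r := Metric.ball_subset_ball (min_le_left _ _)
    have hsub_r' : s ⊆ Metric.ball (0 : ℝ) r' := Metric.ball_subset_ball (min_le_right _ _)
    have hopen : IsOpen s := Metric.isOpen_ball
    have hdiff : DifferentiableOn ℝ f s := fun x hx =>
      ((hball x (hsub_r hx)).1.differentiableAt).differentiableWithinAt
    have hconst : ∀ x ∈ s, f x = f 0 := by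
      intro x hx
      refine (convex_ball _ _).is_const_of_fderivWithin_eq_zero hdiff ?_ hx ?_
      · intro z hz
        rw [fderivWithin_of_isOpen hopen hz]
        have hd : DifferentiableAt ℝ f z := (hball z (hsub_r hz)).1.differentiableAt
        have h0 : HasDerivAt f 0 z := by
          have := hd.hasDerivAt
          rwa [hz0 z (hsub_r' hz)] at this
        have h0' : HasFDerivAt f (0 : ℝ →L[ℝ] ℝ) z := by
          have := h0.hasFDerivAt
          rwa [ContinuousLinearMap.toSpanSingleton_zero] at this
        exact h0'.fderiv
      · simp [hs, Metric.mem_ball, lt_min hr hr']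
    filter_upwards [Metric.ball_mem_nhds (0 : ℝ) (lt_min hr hr')] with x hx
    rw [hconst x hx, hf0]
  · rw [eventually_nhdsWithin_iff] at h
    rcases Metric.eventually_nhds_iff_ball.mp h with ⟨r', hr', hne⟩
    refine ⟨min (min r r') ε, by positivity, ?_⟩
    set δ := min (min r r') ε with hδ
    have hδr : δ ≤ r := le_trans (min_le_left _ _) (min_le_left _ _)
    have hδr' : δ ≤ r' := le_trans (min_le_left _ _) (min_le_right _ _)
    have hδε : δ ≤ ε := min_le_right _ _
    have hIcosub : Set.Ico (0 : ℝ) δ ⊆ Metric.ball (0 : ℝ) r := by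
      intro x hx
      simp only [Metric.mem_ball, Real.dist_eq, sub_zero]
      rw [abs_of_nonneg hx.1]; exact lt_of_lt_of_le hx.2 hδr
    have hne' : ∀ t ∈ Set.Ioo (0 : ℝ) δ, deriv f t ≠ 0 := by
      intro t ht
      apply hne t
      · simp only [Metric.mem_ball, Real.dist_eq, sub_zero]
        rw [abs_of_pos ht.1]; exact lt_of_lt_of_le ht.2 hδr'
      · exact ne_of_gt ht.1
    have hcont : ContinuousOn (deriv f) (Set.Ioo (0 : ℝ) δ) := fun x hx =>
      ((hball x (hIcosub ⟨le_of_lt hx.1, hx.2⟩)).2.continuousAt).continuousWithinAt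
    by_contra hcon
    push_neg at hcon
    obtain ⟨t₀, ht₀, ht₀le⟩ := hcon
    have ht₀neg : deriv f t₀ < 0 := lt_of_le_of_ne ht₀le (hne' t₀ ht₀)
    have hallneg : ∀ t ∈ Set.Ioo (0 : ℝ) δ, deriv f t < 0 := by
      intro t ht
      rcases lt_or_ge (deriv f t) 0 with h' | h'
      · exact h'
      exfalso
      have htpos : 0 < deriv f t := lt_of_le_of_ne h' (Ne.symm (hne' t ht))
      have huIcc : Set.uIcc t₀ t ⊆ Set.Ioo (0 : ℝ) δ := by
        exact Set.ordConnected_Ioo.uIcc_subset ht₀ ht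
      have hcont' : ContinuousOn (deriv f) (Set.uIcc t₀ t) := hcont.mono huIcc
      have : (0 : ℝ) ∈ Set.uIcc (deriv f t₀) (deriv f t) :=
        Set.mem_uIcc.mpr (Or.inl ⟨le_of_lt ht₀neg, le_of_lt htpos⟩)
      obtain ⟨c, hc, hc0⟩ := intermediate_value_uIcc hcont' this
      exact hne' c (huIcc hc) hc0
    have hanti : StrictAntiOn f (Set.Ico (0 : ℝ) δ) := by
      apply strictAntiOn_of_deriv_neg (convex_Ico 0 δ)
      · exact fun x hx => ((hball x (hIcosub hx)).1.continuousAt).continuousWithinAt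
      · rw [interior_Ico]; exact hallneg
    have hδpos : (0 : ℝ) < δ := by positivity
    set t := δ / 2 with htdef
    have htmem : t ∈ Set.Ico (0 : ℝ) δ := ⟨by positivity, by linarith⟩
    have : f t < f 0 := hanti ⟨le_refl 0, hδpos⟩ htmem (by positivity)
    rw [hf0] at this
    have := hfnn t ⟨le_of_lt (by positivity), lt_of_lt_of_le htmem.2 hδε⟩
    linarith

theorem coefficient_positive_near_zero
    (f g : ℝ → ℝ) (hf : AnalyticAt ℝ f 0) (hg : AnalyticAt ℝ g 0)
    (hf0 : f 0 = 0) (hg0 : g 0 = 0)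
    (ε : ℝ) (hε : 0 < ε)
    (hfnn : ∀ t ∈ Set.Ico (0 : ℝ) ε, 0 ≤ f t)
    (hgnn : ∀ t ∈ Set.Ico (0 : ℝ) ε, 0 ≤ g t)
    (hfnz : ¬ ∀ᶠ t in nhds (0 : ℝ), f t = 0)
    (hgnz : ¬ ∀ᶠ t in nhds (0 : ℝ), g t = 0)
    (a : ℝ → ℝ) (ha : ∀ t ∈ Set.Ioo (0 : ℝ) ε, deriv f t = a t * deriv g t) :
    ∃ δ > 0, ∀ t ∈ Set.Ioo (0 : ℝ) δ, 0 < a t := by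
  obtain ⟨δ₁, hδ₁, hf'⟩ := deriv_pos_near_zero f hf hf0 hε hfnn hfnz
  obtain ⟨δ₂, hδ₂, hg'⟩ := deriv_pos_near_zero g hg hg0 hε hgnn hgnz
  refine ⟨min (min δ₁ δ₂) ε, by positivity, ?_⟩
  intro t ht
  have ht₁ : t ∈ Set.Ioo (0 : ℝ) δ₁ :=
    ⟨ht.1, lt_of_lt_of_le ht.2 (le_trans (min_le_left _ _) (min_le_left _ _))⟩
  have ht₂ : t ∈ Set.Ioo (0 : ℝ) δ₂ :=
    ⟨ht.1, lt_of_lt_of_le ht.2 (le_trans (min_le_left _ _) (min_le_right _ _))⟩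
  have htε : t ∈ Set.Ioo (0 : ℝ) ε := ⟨ht.1, lt_of_lt_of_le ht.2 (min_le_right _ _)⟩
  have h1 := hf' t ht₁
  have h2 := hg' t ht₂
  have h3 := ha t htε
  nlinarith [mul_pos h1 h2]
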